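/- Let F_q be a finite field, let C_1 ⊇ C_2 ⊇ ⋯ ⊇ C_s be nested non-zero linear codes in F_q^m with minimum distances d_1, …, d_s, and let A ∈ F_q^{s×l} (s ≤ l) be non-singular by columns. Then the minimum distance of the matrix-product code C = [C_1 ⋯ C_s]·A equals min{l·d_1, (l−1)·d_2, …, (l−s+1)·d_s}. -/

import Mathlib

/-- The matrix-product code `[C_1 ⋯ C_s]·A`: all vectors
`(Σ_j a_{j,1} c_j, …, Σ_j a_{j,l} c_j)` with `c_j ∈ C_j`, viewed as `l` blocks of
length `m`. -/
def matrixProductCode {F : Type*} [Field F] {m s l : ℕ}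
    (C : Fin s → Submodule F (Fin m → F)) (A : Matrix (Fin s) (Fin l) F) :
    Set (Fin l → Fin m → F) :=
  { v | ∃ c : Fin s → (Fin m → F), (∀ j, c j ∈ C j) ∧ v = fun i => ∑ j, A j i • c j }

/-- `A` is non-singular by columns: for every `1 ≤ t ≤ s` and every choice of columns
`j_1 < ⋯ < j_t`, the `t×t` submatrix of the first `t` rows and those columns is
non-singular.  (For `t = 0` the condition holds trivially.) -/
def nonsingularByColumns {F : Type*} [Field F] {s l : ℕ}
    (A : Matrix (Fin s) (Fin l) F) : Prop :=
  ∀ (t : ℕ) (ht : t ≤ s) (j : Fin t → Fin l), StrictMono j →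
    (Matrix.of fun r c : Fin t => A (Fin.castLE ht r) (j c)).det ≠ 0


open Matrix

lemma key_zero_card {F : Type*} [Field F] [DecidableEq F] {s l : ℕ}
    (A : Matrix (Fin s) (Fin l) F) (hA : nonsingularByColumns A)
    (t : ℕ) (ht : t + 1 ≤ s) (lam : Fin (t+1) → F) (hlam : lam (Fin.last t) ≠ 0) :
    (Finset.univ.filter fun i : Fin l =>
      ∑ r, lam r * A (Fin.castLE ht r) i = 0).card ≤ t := by
  by_contra h
  push_neg at h
  set Z := (Finset.univ.filter fun i : Fin l =>
      ∑ r, lam r * A (Fin.castLE ht r) i = 0) with hZ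
  have hc : t + 1 ≤ Z.card := h
  set e := Z.orderEmbOfCardLe hc with he
  have hmem : ∀ r, e r ∈ Z := fun r => Z.orderEmbOfCardLe_mem hc r
  have hdet := hA (t+1) ht (fun c => e c) e.strictMono
  set B : Matrix (Fin (t+1)) (Fin (t+1)) F :=
    Matrix.of fun r c => A (Fin.castLE ht r) (e c) with hB
  have h0 : B.transpose *ᵥ lam = 0 := by
    funext c
    have := hmem c
    rw [hZ, Finset.mem_filter] at this
    simpa [Matrix.mulVec, dotProduct, hB, mul_comm] using this.2
  have hd0 : B.transpose.det = 0 := by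
    rw [← Matrix.exists_mulVec_eq_zero_iff]
    exact ⟨lam, fun hl0 => hlam (congrFun hl0 _), h0⟩
  rw [Matrix.det_transpose] at hd0
  exact hdet hd0

lemma sum_castLE {M : Type*} [AddCommMonoid M] {s : ℕ} (t : ℕ) (ht : t + 1 ≤ s)
    (f : Fin s → M) (hf : ∀ j : Fin s, t < j.1 → f j = 0) :
    ∑ j, f j = ∑ r : Fin (t+1), f (Fin.castLE ht r) := by
  rw [show (∑ r : Fin (t+1), f (Fin.castLE ht r)) =
      ∑ j ∈ Finset.univ.map (Fin.castLEEmb ht), f j by rw [Finset.sum_map]; rfl]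
  refine (Finset.sum_subset (Finset.subset_univ _) ?_).symm
  intro j _ hj
  refine hf j ?_
  by_contra hle
  push_neg at hle
  apply hj
  simp only [Finset.mem_map, Finset.mem_univ, true_and]
  exact ⟨⟨j.1, by omega⟩, by apply Fin.ext; simp [Fin.castLEEmb]⟩

lemma weight_sum {F : Type*} [Field F] [DecidableEq F] {m l : ℕ}
    (v : Fin l → Fin m → F) :
    ∑ i, hammingNorm (v i)
      = ∑ p : Fin m, (Finset.univ.filter fun i : Fin l => v i p ≠ 0).card := by
  simp only [hammingNorm, Finset.card_filter]
  exact Finset.sum_comm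

lemma lower_bound {F : Type*} [Field F] [DecidableEq F] {m s l : ℕ}
    (C : Fin s → Submodule F (Fin m → F))
    (d : Fin s → ℕ)
    (hd₁ : ∀ j, ∀ x ∈ C j, x ≠ 0 → d j ≤ hammingNorm x)
    (A : Matrix (Fin s) (Fin l) F) (hA : nonsingularByColumns A)
    (v : Fin l → Fin m → F) (hv : v ∈ matrixProductCode C A) (hv0 : v ≠ 0) :
    ∃ t : Fin s, (l - t.1) * d t ≤ ∑ i, hammingNorm (v i) := by
  obtain ⟨c, hc, hveq⟩ := hv
  have hTne : (Finset.univ.filter fun j : Fin s => c j ≠ 0).Nonempty := by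
    by_contra hne
    rw [Finset.not_nonempty_iff_eq_empty, Finset.filter_eq_empty_iff] at hne
    apply hv0
    funext i p
    have : ∀ j : Fin s, c j = 0 := fun j => by
      by_contra h; exact hne (Finset.mem_univ j) h
    simp [hveq, this]
  set T := Finset.univ.filter fun j : Fin s => c j ≠ 0 with hT
  set t := T.max' hTne with htdef
  have htmem : t ∈ T := T.max'_mem hTne
  have hct : c t ≠ 0 := (Finset.mem_filter.mp htmem).2
  have hgt : ∀ j : Fin s, t.1 < j.1 → c j = 0 := by
    intro j hj
    by_contra h
    have : j ∈ T := Finset.mem_filter.mpr ⟨Finset.mem_univ _, h⟩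
    exact absurd (T.le_max' j this) (not_le.mpr (Fin.lt_def.mpr hj))
  have ht : t.1 + 1 ≤ s := t.isLt
  refine ⟨t, ?_⟩
  -- per coordinate p in support of c t
  have hkey : ∀ p : Fin m, c t p ≠ 0 →
      l - t.1 ≤ (Finset.univ.filter fun i : Fin l => v i p ≠ 0).card := by
    intro p hp
    set lam : Fin (t.1+1) → F := fun r => c (Fin.castLE ht r) p with hlamdef
    have hlast : Fin.castLE ht (Fin.last t.1) = t := by apply Fin.ext; simp
    have hlam : lam (Fin.last t.1) ≠ 0 := by rw [hlamdef]; simpa [hlast] using hp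
    have hvip : ∀ i : Fin l, v i p = ∑ r, lam r * A (Fin.castLE ht r) i := by
      intro i
      have : v i p = ∑ j : Fin s, c j p * A j i := by
        simp [hveq, Finset.sum_apply, mul_comm]
      rw [this, sum_castLE t.1 ht (fun j => c j p * A j i)
        (fun j hj => by show c j p * A j i = 0; rw [hgt j hj]; simp)]
    have hz := key_zero_card A hA t.1 ht lam hlam
    have hsplit := Finset.card_filter_add_card_filter_not
      (s := (Finset.univ : Finset (Fin l)))
      (p := fun i => v i p = 0)
    have hfeq : (Finset.univ.filter fun i : Fin l => v i p = 0)
        = (Finset.univ.filter fun i : Fin l =>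
            ∑ r, lam r * A (Fin.castLE ht r) i = 0) := by
      apply Finset.filter_congr
      intro i _
      rw [hvip i]
    have hcard : (Finset.univ.filter fun i : Fin l => v i p = 0).card ≤ t.1 := by
      rw [hfeq]; exact hz
    have hl : (Finset.univ.filter fun i : Fin l => v i p = 0).card
        + (Finset.univ.filter fun i : Fin l => v i p ≠ 0).card = l := by
      simpa using hsplit
    omega
  rw [weight_sum]
  calc (l - t.1) * d t
      ≤ (l - t.1) * hammingNorm (c t) :=
        Nat.mul_le_mul_left _ (hd₁ t (c t) (hc t) hct)
    _ = ∑ _p ∈ (Finset.univ.filter fun p : Fin m => c t p ≠ 0), (l - t.1) := by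
        rw [Finset.sum_const, smul_eq_mul, Nat.mul_comm]
        rfl
    _ ≤ ∑ p ∈ (Finset.univ.filter fun p : Fin m => c t p ≠ 0),
          (Finset.univ.filter fun i : Fin l => v i p ≠ 0).card :=
        Finset.sum_le_sum fun p hp => hkey p (Finset.mem_filter.mp hp).2
    _ ≤ ∑ p : Fin m, (Finset.univ.filter fun i : Fin l => v i p ≠ 0).card :=
        Finset.sum_le_sum_of_subset (Finset.filter_subset _ _)

lemma exists_codeword {F : Type*} [Field F] [DecidableEq F] {m s l : ℕ} (hsl : s ≤ l)
    (C : Fin s → Submodule F (Fin m → F))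
    (hnested : ∀ i j : Fin s, i ≤ j → C j ≤ C i)
    (A : Matrix (Fin s) (Fin l) F) (hA : nonsingularByColumns A)
    (i₀ : Fin s) (x : Fin m → F) (hx : x ∈ C i₀) (hx0 : x ≠ 0) :
    ∃ v ∈ matrixProductCode C A, v ≠ 0 ∧
      ∑ i, hammingNorm (v i) = (l - i₀.1) * hammingNorm x := by
  set t' := i₀.1 with ht'def
  have ht : t' + 1 ≤ s := i₀.isLt
  have ht's : t' ≤ s := le_of_lt i₀.isLt
  have hl' : t' ≤ l := le_trans ht's hsl
  set B0 : Matrix (Fin t') (Fin t') F :=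
    Matrix.of fun r c => A (Fin.castLE ht's r) (Fin.castLE hl' c) with hB0
  have hdet : B0.det ≠ 0 :=
    hA t' ht's (fun c => Fin.castLE hl' c) (Fin.strictMono_castLE hl')
  have hdetT : IsUnit B0.transpose.det := by
    rw [Matrix.det_transpose]; exact isUnit_iff_ne_zero.mpr hdet
  set b : Fin t' → F := fun j => -A i₀ (Fin.castLE hl' j) with hbdef
  set μ : Fin t' → F := B0.transpose⁻¹ *ᵥ b with hμdef
  have hBb : B0.transpose *ᵥ μ = b := by
    rw [hμdef, Matrix.mulVec_mulVec, Matrix.mul_nonsing_inv _ hdetT, Matrix.one_mulVec]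
  set lam : Fin (t'+1) → F := Fin.snoc μ 1 with hlamdef
  have hlamlast : lam (Fin.last t') = 1 := by rw [hlamdef]; simp
  set u : Fin l → F := fun i => ∑ r, lam r * A (Fin.castLE ht r) i with hudef
  -- u vanishes on the first t' columns
  have huzero : ∀ j : Fin t', u (Fin.castLE hl' j) = 0 := by
    intro j
    have hlaste : Fin.castLE ht (Fin.last t') = i₀ := by apply Fin.ext; simp [ht'def]
    have hsum : u (Fin.castLE hl' j)
        = ∑ r : Fin t', μ r * B0 r j + A i₀ (Fin.castLE hl' j) := by
      rw [hudef]
      simp only []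
      rw [Fin.sum_univ_castSucc]
      congr 1
      · apply Finset.sum_congr rfl
        intro r _
        rw [hlamdef]
        simp only [Fin.snoc_castSucc]
        congr 1
      · rw [hlamdef, hlaste]
        simp
    rw [hsum]
    have : (B0.transpose *ᵥ μ) j = b j := congrFun hBb j
    rw [Matrix.mulVec, dotProduct] at this
    have h2 : ∑ r : Fin t', μ r * B0 r j = b j := by
      rw [← this]
      apply Finset.sum_congr rfl
      intro r _
      rw [Matrix.transpose_apply, mul_comm]
    rw [h2, hbdef]
    simp
  -- the zero set of u has exactly t' elements
  have hcardle : (Finset.univ.filter fun i : Fin l => u i = 0).card ≤ t' := by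
    have := key_zero_card A hA t' ht lam (by rw [hlamlast]; exact one_ne_zero)
    convert this using 2
  have hcardge : t' ≤ (Finset.univ.filter fun i : Fin l => u i = 0).card := by
    have hsub : Finset.univ.map (Fin.castLEEmb hl')
        ⊆ Finset.univ.filter fun i : Fin l => u i = 0 := by
      intro i hi
      rw [Finset.mem_map] at hi
      obtain ⟨j, _, rfl⟩ := hi
      exact Finset.mem_filter.mpr ⟨Finset.mem_univ _, huzero j⟩
    have := Finset.card_le_card hsub
    simpa using this
  have hne : (Finset.univ.filter fun i : Fin l => ¬ u i = 0).card = l - t' := by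
    have hsplit := Finset.card_filter_add_card_filter_not
      (s := (Finset.univ : Finset (Fin l))) (p := fun i => u i = 0)
    simp only [Finset.card_univ, Fintype.card_fin] at hsplit
    omega
  -- the codeword
  set c : Fin s → Fin m → F :=
    fun j => if h : j.1 < t' + 1 then lam ⟨j.1, h⟩ • x else 0 with hcdef
  set v : Fin l → Fin m → F := fun i => u i • x with hvdef
  have hcmem : ∀ j, c j ∈ C j := by
    intro j
    rw [hcdef]
    by_cases h : j.1 < t' + 1
    · simp only [h, dif_pos]
      exact Submodule.smul_mem _ _ (hnested j i₀ (by rw [Fin.le_def]; omega) hx)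
    · simp only [h, dif_neg, not_false_iff]
      exact Submodule.zero_mem _
  have hvmem : v ∈ matrixProductCode C A := by
    refine ⟨c, hcmem, ?_⟩
    funext i
    rw [hvdef]
    simp only []
    rw [sum_castLE t' ht (fun j => A j i • c j) ?side]
    case side =>
      intro j hj
      have hcj : c j = 0 := by rw [hcdef]; simp only [dif_neg (by omega : ¬ j.1 < t' + 1)]
      show A j i • c j = 0
      rw [hcj, smul_zero]
    have hcr : ∀ r : Fin (t'+1), c (Fin.castLE ht r) = lam r • x := by
      intro r
      rw [hcdef]
      simp only [Fin.coe_castLE, r.isLt, dif_pos]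
    rw [hudef]
    simp only []
    rw [Finset.sum_smul]
    apply Finset.sum_congr rfl
    intro r _
    rw [hcr r, smul_smul, mul_comm]
  have hvne : v ≠ 0 := by
    have hpos : 0 < l - t' := by omega
    have : (Finset.univ.filter fun i : Fin l => ¬ u i = 0).Nonempty := by
      rw [← Finset.card_pos, hne]; exact hpos
    obtain ⟨i, hi⟩ := this
    have hui : u i ≠ 0 := (Finset.mem_filter.mp hi).2
    intro h
    apply hx0
    have : v i = 0 := by rw [h]; rfl
    rw [hvdef] at this
    simpa [hui] using (smul_eq_zero.mp this)
  refine ⟨v, hvmem, hvne, ?_⟩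
  have hnorm : ∀ i, hammingNorm (v i) = if u i = 0 then 0 else hammingNorm x := by
    intro i
    by_cases h : u i = 0
    · simp [hvdef, h]
    · rw [if_neg h]
      show hammingNorm (u i • x) = hammingNorm x
      simp only [hammingNorm]
      apply congrArg
      apply Finset.filter_congr
      intro p _
      simp [Pi.smul_apply, smul_eq_mul, mul_eq_zero, h]
  calc ∑ i, hammingNorm (v i)
      = ∑ i, if u i = 0 then 0 else hammingNorm x :=
        Finset.sum_congr rfl fun i _ => hnorm i
    _ = (l - i₀.1) * hammingNorm x := by
        rw [Finset.sum_ite, Finset.sum_const_zero, zero_add, Finset.sum_const,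
          smul_eq_mul, hne, ht'def]

/-- If `C_1 ⊇ C_2 ⊇ ⋯ ⊇ C_s` are nested non-zero linear codes in
`F_q^m` with minimum distances `d_1,…,d_s` and `A` is non-singular by columns, then the
minimum distance of `[C_1 ⋯ C_s]·A` equals `min{l·d_1, (l−1)·d_2, …, (l−s+1)·d_s}`
(below, `i : Fin s` is 0-based, so `l − i.1 = l − i + 1` for the 1-based index `i`). -/

theorem statement9 (F : Type*) [Field F] [Fintype F] [DecidableEq F]
    (m s l : ℕ) (hm : 1 ≤ m) (hs : 0 < s) (hsl : s ≤ l)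
    (C : Fin s → Submodule F (Fin m → F)) (hC : ∀ j, C j ≠ ⊥)
    (hnested : ∀ i j : Fin s, i ≤ j → C j ≤ C i)
    (d : Fin s → ℕ)
    (hd₁ : ∀ j, ∀ x ∈ C j, x ≠ 0 → d j ≤ hammingNorm x)
    (hd₂ : ∀ j, ∃ x ∈ C j, x ≠ 0 ∧ hammingNorm x = d j)
    (A : Matrix (Fin s) (Fin l) F) (hA : nonsingularByColumns A) :
    (∀ v ∈ matrixProductCode C A, v ≠ 0 →
      Finset.univ.inf' ⟨⟨0, hs⟩, Finset.mem_univ _⟩ (fun i : Fin s => (l - i.1) * d i)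
        ≤ ∑ i, hammingNorm (v i)) ∧
    (∃ v ∈ matrixProductCode C A, v ≠ 0 ∧
      ∑ i, hammingNorm (v i)
        = Finset.univ.inf' ⟨⟨0, hs⟩, Finset.mem_univ _⟩
            (fun i : Fin s => (l - i.1) * d i)) := by
  constructor
  · intro v hv hv0
    obtain ⟨t, hle⟩ := lower_bound C d hd₁ A hA v hv hv0
    exact le_trans (Finset.inf'_le _ (Finset.mem_univ t)) hle
  · obtain ⟨i₀, -, heq⟩ := Finset.exists_mem_eq_inf'
      (H := ⟨⟨0, hs⟩, Finset.mem_univ _⟩) (fun i : Fin s => (l - i.1) * d i)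
    obtain ⟨x, hx, hx0, hxnorm⟩ := hd₂ i₀
    obtain ⟨v, hvmem, hvne, hw⟩ := exists_codeword hsl C hnested A hA i₀ x hx hx0
    exact ⟨v, hvmem, hvne, by rw [hw, hxnorm, heq]⟩
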